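/- Let G be a finite non-Abelian AC-group and let C_1, …, C_n be the distinct centralizers of non-central elements of G. Then the energy of the commuting graph Γ_G equals 2·Σ_{i=1}^n (|C_i| − |Z(G)| − 1), that is, E(Γ_G) = 2(Σ_{i=1}^n |C_i|) − 2n(|Z(G)| + 1). -/

import Mathlib

open scoped Classical

/-- The commuting graph of a group `G`: its vertices are the non-central
elements of `G`, and two distinct vertices are adjacent iff they commute. -/
noncomputable def commGraph (G : Type*) [Group G] :
    SimpleGraph {g : G // g ∉ Subgroup.center G} where
  Adj x y := x ≠ y ∧ (x : G) * y = (y : G) * x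
  symm := ⟨fun _ _ h => ⟨h.1.symm, h.2.symm⟩⟩
  loopless := ⟨fun _ h => h.1 rfl⟩

lemma adjMatrix_isHermitian {V : Type*} [Fintype V] (Γ : SimpleGraph V) :
    (Γ.adjMatrix ℝ).IsHermitian := by
  ext i j
  simp [Matrix.conjTranspose_apply, SimpleGraph.adj_comm]

/-- The energy of a finite graph: the sum of the absolute values of the
eigenvalues of its adjacency matrix. -/
noncomputable def graphEnergy {V : Type*} [Fintype V] (Γ : SimpleGraph V) : ℝ :=
  ∑ i, |(adjMatrix_isHermitian Γ).eigenvalues i|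

/-- `G` is an AC-group: the centralizer of every non-central element is Abelian. -/
def IsACGroup (G : Type*) [Group G] : Prop :=
  ∀ x : G, x ∉ Subgroup.center G →
    ∀ y ∈ Subgroup.centralizer ({x} : Set G), ∀ z ∈ Subgroup.centralizer ({x} : Set G),
      y * z = z * y

/-- Application of a finite sum in Euclidean space. -/
lemma euclid_sum_apply {ι κ : Type*} [Fintype ι] (s : Finset κ)
    (g : κ → EuclideanSpace ℝ ι) (x : ι) :
    (∑ j ∈ s, g j) x = ∑ j ∈ s, g j x := by
  induction s using Finset.cons_induction with
  | empty => rfl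
  | cons a s ha ih => rw [Finset.sum_cons, Finset.sum_cons, PiLp.add_apply, ih]

/-- The energy of a disjoint union of cliques with `n` (nonempty) blocks on a vertex set `V`
is `2 * (|V| - n)`. -/
lemma energy_of_blocks {V : Type*} [Fintype V] (Γ : SimpleGraph V) {n : ℕ}
    (f : V → Fin n) (hsurj : Function.Surjective f)
    (hadj : ∀ x y : V, Γ.Adj x y ↔ x ≠ y ∧ f x = f y) :
    graphEnergy Γ = 2 * ((Fintype.card V : ℝ) - n) := by
  rw [graphEnergy]
  set hA := adjMatrix_isHermitian Γ with hAdef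
  set lam := hA.eigenvalues with hlam
  set b := hA.eigenvectorBasis with hb
  have hbne : ∀ i : V, b i ≠ 0 := fun i => by simpa using b.toBasis.ne_zero i
  -- the key eigenvector relation
  have key : ∀ i x : V,
      (lam i + 1) * b i x = ∑ y ∈ Finset.univ.filter (fun y => f y = f x), b i y := by
    intro i x
    have hins : (Finset.univ.filter fun y => f y = f x)
        = insert x (Finset.univ.filter fun y => Γ.Adj x y) := by
      ext y
      simp only [Finset.mem_insert, Finset.mem_filter, Finset.mem_univ, true_and, hadj]
      constructor
      · intro h
        rcases eq_or_ne y x with rfl | hne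
        · exact Or.inl rfl
        · exact Or.inr ⟨Ne.symm hne, h.symm⟩
      · rintro (rfl | ⟨-, h⟩)
        · rfl
        · exact h.symm
    have hx : x ∉ Finset.univ.filter fun y => Γ.Adj x y := by simp
    rw [hins, Finset.sum_insert hx]
    have h2 : ∑ y ∈ Finset.univ.filter (fun y => Γ.Adj x y), b i y = lam i * b i x := by
      have h1 := congrFun (hA.mulVec_eigenvectorBasis i) x
      rw [SimpleGraph.adjMatrix_mulVec_apply, SimpleGraph.neighborFinset_eq_filter] at h1
      simpa using h1
    rw [h2]; ring
  -- fiber sums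
  set S : V → Fin n → ℝ := fun i j => ∑ y ∈ Finset.univ.filter (fun y => f y = j), b i y
    with hS
  have keyS : ∀ i x : V, (lam i + 1) * b i x = S i (f x) := key
  -- dichotomy for eigenvalues
  have hdich : ∀ i : V, lam i = -1 ∨ 0 ≤ lam i := by
    intro i
    by_cases h : lam i = -1
    · exact Or.inl h
    right
    have hc : lam i + 1 ≠ 0 := fun h0 => h (by linarith)
    obtain ⟨x, hxne⟩ : ∃ x, b i x ≠ 0 := by
      by_contra h0
      push_neg at h0
      exact hbne i (PiLp.ext h0)
    have hSx : S i (f x) ≠ 0 := by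
      rw [← keyS i x]; exact mul_ne_zero hc hxne
    have hmem : x ∈ Finset.univ.filter (fun y => f y = f x) := by simp
    have hm1 : 1 ≤ ((Finset.univ.filter (fun y => f y = f x)).card : ℝ) := by
      have := Finset.card_pos.mpr ⟨x, hmem⟩
      exact_mod_cast this
    have hceq : lam i + 1 = ((Finset.univ.filter (fun y => f y = f x)).card : ℝ) := by
      have h1 : (lam i + 1) * S i (f x)
          = ((Finset.univ.filter (fun y => f y = f x)).card : ℝ) * S i (f x) := by
        calc (lam i + 1) * S i (f x)
            = ∑ y ∈ Finset.univ.filter (fun y => f y = f x), (lam i + 1) * b i y := by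
              rw [← Finset.mul_sum]
          _ = ∑ _y ∈ Finset.univ.filter (fun y => f y = f x), S i (f x) :=
              Finset.sum_congr rfl fun y hy => by
                rw [keyS i y, (Finset.mem_filter.mp hy).2]
          _ = ((Finset.univ.filter (fun y => f y = f x)).card : ℝ) * S i (f x) := by
              rw [Finset.sum_const, nsmul_eq_mul]
      exact mul_right_cancel₀ hSx h1
    linarith
  -- the block indicator vectors
  set w : Fin n → EuclideanSpace ℝ V :=
    fun j => (WithLp.equiv 2 (∀ _ : V, ℝ)).symm (fun x => if f x = j then 1 else 0) with hw
  have hwapp : ∀ (j : Fin n) (x : V), w j x = if f x = j then 1 else 0 := fun j x => rfl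
  -- inner products with indicator vectors are fiber sums
  have hinner : ∀ (i : V) (j : Fin n), inner (𝕜 := ℝ) (b i) (w j) = S i j := by
    intro i j
    rw [PiLp.inner_apply]
    have hterm : ∀ x : V, (inner ℝ (b i x) (w j x) : ℝ)
        = if f x = j then b i x else 0 := by
      intro x
      rw [hwapp]
      split <;> simp [RCLike.inner_apply]
    rw [Finset.sum_congr rfl fun x _ => hterm x]
    show _ = ∑ y ∈ Finset.univ.filter (fun y => f y = j), b i y
    rw [Finset.sum_filter]
  -- eigenvectors with eigenvalue -1 are orthogonal to all indicators
  have hS0 : ∀ i : V, lam i = -1 → ∀ j : Fin n, S i j = 0 := by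
    intro i hi j
    obtain ⟨x, rfl⟩ := hsurj j
    have := keyS i x
    rw [hi] at this
    simpa using this.symm
  set T : Finset V := Finset.univ.filter (fun i => lam i ≠ -1) with hT
  -- eigenvectors with eigenvalue ≠ -1 lie in the span of the indicators
  have hBspan : ∀ i ∈ T, b i ∈ Submodule.span ℝ (Set.range w) := by
    intro i hi
    have hc : lam i + 1 ≠ 0 := fun h0 => (Finset.mem_filter.mp hi).2 (by linarith)
    have hrep : b i = ∑ j, (S i j / (lam i + 1)) • w j := by
      apply PiLp.ext
      intro x
      rw [euclid_sum_apply]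
      have : ∀ j, ((S i j / (lam i + 1)) • w j) x
          = if f x = j then S i j / (lam i + 1) else 0 := by
        intro j
        rw [PiLp.smul_apply, hwapp, smul_eq_mul]
        split <;> simp
      rw [Finset.sum_congr rfl fun j _ => this j, Finset.sum_ite_eq]
      simp only [Finset.mem_univ, if_true]
      rw [eq_div_iff hc, mul_comm]
      exact keyS i x
    rw [hrep]
    exact Submodule.sum_mem _ fun j _ =>
      Submodule.smul_mem _ _ (Submodule.subset_span ⟨j, rfl⟩)
  -- the indicators lie in the span of the eigenvectors with eigenvalue ≠ -1
  have hWspan : ∀ j, w j ∈ Submodule.span ℝ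
      (Set.range (fun i : {i : V // i ∈ T} => b (i : V))) := by
    intro j
    have hrep := b.sum_repr' (w j)
    have hsplit : ∑ i, inner (𝕜 := ℝ) (b i) (w j) • b i
        = ∑ i ∈ T, inner (𝕜 := ℝ) (b i) (w j) • b i := by
      rw [← Finset.sum_filter_add_sum_filter_not Finset.univ (fun i => lam i ≠ -1)]
      have hz : ∑ i ∈ Finset.univ.filter (fun i => ¬ lam i ≠ -1),
          inner (𝕜 := ℝ) (b i) (w j) • b i = 0 := by
        apply Finset.sum_eq_zero
        intro i hi
        have hi' : lam i = -1 := not_not.mp (Finset.mem_filter.mp hi).2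
        rw [hinner, hS0 i hi' j, zero_smul]
      rw [hz, add_zero]
    rw [← hrep, hsplit]
    exact Submodule.sum_mem _ fun i hi =>
      Submodule.smul_mem _ _ (Submodule.subset_span ⟨⟨i, hi⟩, rfl⟩)
  -- count: |T| = n
  have hTcard : T.card = n := by
    have hspan_eq : Submodule.span ℝ (Set.range (fun i : {i : V // i ∈ T} => b (i : V)))
        = Submodule.span ℝ (Set.range w) := by
      apply le_antisymm
      · rw [Submodule.span_le]
        rintro _ ⟨⟨i, hi⟩, rfl⟩
        exact hBspan i hi
      · rw [Submodule.span_le]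
        rintro _ ⟨j, rfl⟩
        exact hWspan j
    have h1 : LinearIndependent ℝ (fun i : {i : V // i ∈ T} => b (i : V)) :=
      (b.orthonormal.comp Subtype.val Subtype.val_injective).linearIndependent
    have h2 : LinearIndependent ℝ w := by
      rw [Fintype.linearIndependent_iff]
      intro g hg j
      obtain ⟨x, rfl⟩ := hsurj j
      have := congrArg (fun v : EuclideanSpace ℝ V => v x) hg
      simp only [euclid_sum_apply] at this
      have h3 : ∀ k : Fin n, (g k • w k) x = if f x = k then g k else 0 := by
        intro k
        rw [PiLp.smul_apply, hwapp, smul_eq_mul]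
        split <;> simp
      rw [Finset.sum_congr rfl fun k _ => h3 k, Finset.sum_ite_eq] at this
      simpa using this
    have e1 := finrank_span_eq_card h1
    have e2 := finrank_span_eq_card h2
    rw [hspan_eq, e2] at e1
    simpa [Fintype.card_coe] using e1.symm
  -- trace is zero
  have htrace : ∑ i, lam i = 0 := by
    have h1 : (Γ.adjMatrix ℝ).trace = ∑ i, lam i := by
      conv_lhs => rw [hA.spectral_theorem]
      rw [Unitary.conjStarAlgAut_apply, Matrix.trace_mul_cycle, Unitary.coe_star_mul_self, Matrix.one_mul,
        Matrix.trace_diagonal]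
      simp [hlam]
    have h2 : (Γ.adjMatrix ℝ).trace = 0 := by
      rw [Matrix.trace]
      apply Finset.sum_eq_zero
      intro x _
      simp [Matrix.diag]
    rw [← h1, h2]
  -- final computation
  have hsplit := Finset.sum_filter_add_sum_filter_not Finset.univ (fun i => lam i ≠ -1)
    (fun i => |lam i|)
  have hcardsplit : T.card + (Finset.univ.filter (fun i => ¬ lam i ≠ -1)).card
      = Fintype.card V := by
    rw [hT]
    rw [Finset.card_filter_add_card_filter_not]
    rfl
  have hTc : ((Finset.univ.filter (fun i => ¬ lam i ≠ -1)).card : ℝ)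
      = (Fintype.card V : ℝ) - n := by
    have : (Finset.univ.filter (fun i => ¬ lam i ≠ -1)).card = Fintype.card V - n := by
      omega
    rw [this]
    have hn_le : n ≤ Fintype.card V := by omega
    push_cast [Nat.cast_sub hn_le]
    ring
  have hpos : ∑ i ∈ T, |lam i| = ∑ i ∈ T, lam i := by
    apply Finset.sum_congr rfl
    intro i hi
    have := (Finset.mem_filter.mp hi).2
    rcases hdich i with h | h
    · exact absurd h this
    · exact abs_of_nonneg h
  have hneg : ∑ i ∈ Finset.univ.filter (fun i => ¬ lam i ≠ -1), |lam i|
      = ((Finset.univ.filter (fun i => ¬ lam i ≠ -1)).card : ℝ) := by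
    rw [Finset.sum_congr rfl (fun i hi => ?_), Finset.sum_const, nsmul_eq_mul, mul_one]
    have hi' : lam i = -1 := not_not.mp (Finset.mem_filter.mp hi).2
    rw [hi']; norm_num
  have hnegsum : ∑ i ∈ Finset.univ.filter (fun i => ¬ lam i ≠ -1), lam i
      = -((Finset.univ.filter (fun i => ¬ lam i ≠ -1)).card : ℝ) := by
    rw [Finset.sum_congr rfl (fun i hi => not_not.mp (Finset.mem_filter.mp hi).2),
      Finset.sum_const, nsmul_eq_mul]
    ring
  have hTsum : ∑ i ∈ T, lam i = ((Finset.univ.filter (fun i => ¬ lam i ≠ -1)).card : ℝ) := by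
    have := Finset.sum_filter_add_sum_filter_not Finset.univ (fun i => lam i ≠ -1) lam
    rw [htrace] at this
    rw [hT]
    linarith [hnegsum, this]
  calc ∑ i, |lam i|
      = ∑ i ∈ T, |lam i| + ∑ i ∈ Finset.univ.filter (fun i => ¬ lam i ≠ -1), |lam i| := by
        rw [hsplit]
    _ = 2 * ((Fintype.card V : ℝ) - n) := by
        rw [hpos, hneg, hTsum, hTc]; ring

/-- The energy of the commuting graph of a finite non-Abelian AC-group, where
`C 1, …, C n` are the distinct centralizers of non-central elements:
`E(Γ_G) = 2 ∑ᵢ |Cᵢ| - 2 n (|Z(G)| + 1)`. -/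
theorem energy_commGraph_of_isACGroup
    (G : Type*) [Group G] [Fintype G] (hna : ∃ x y : G, x * y ≠ y * x)
    (hAC : IsACGroup G)
    (n : ℕ) (C : Fin n → Subgroup G)
    (hCinj : Function.Injective C)
    (hCcent : ∀ i, ∃ x : G, x ∉ Subgroup.center G ∧ C i = Subgroup.centralizer {x})
    (hCall : ∀ x : G, x ∉ Subgroup.center G → ∃ i, C i = Subgroup.centralizer {x}) :
    graphEnergy (commGraph G) =
      2 * (∑ i, (Nat.card (C i) : ℝ)) -
        2 * n * ((Nat.card (Subgroup.center G) : ℝ) + 1) := by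

  classical
  -- self-membership in centralizers
  have hself : ∀ x : G, x ∈ Subgroup.centralizer ({x} : Set G) := by
    intro x
    rw [Subgroup.mem_centralizer_iff]
    rintro a rfl
    rfl
  have hmemc : ∀ x y : G, x * y = y * x → y ∈ Subgroup.centralizer ({x} : Set G) := by
    intro x y hxy
    rw [Subgroup.mem_centralizer_iff]
    intro a ha
    rw [Set.mem_singleton_iff] at ha
    subst ha
    exact hxy
  -- centralizers of commuting non-central elements coincide
  have hsub : ∀ x y : G, x ∉ Subgroup.center G → x * y = y * x →
      Subgroup.centralizer ({x} : Set G) ≤ Subgroup.centralizer ({y} : Set G) := by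
    intro x y hx hxy z hz
    exact hmemc y z (hAC x hx y (hmemc x y hxy) z hz)
  have hswap : ∀ x y : G, x ∉ Subgroup.center G → y ∉ Subgroup.center G → x * y = y * x →
      Subgroup.centralizer ({x} : Set G) = Subgroup.centralizer ({y} : Set G) :=
    fun x y hx hy hxy => le_antisymm (hsub x y hx hxy) (hsub y x hy hxy.symm)
  -- the block map
  let f : {g : G // g ∉ Subgroup.center G} → Fin n := fun x => (hCall x.1 x.2).choose
  have hf : ∀ x : {g : G // g ∉ Subgroup.center G},
      C (f x) = Subgroup.centralizer ({(x : G)} : Set G) :=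
    fun x => (hCall x.1 x.2).choose_spec
  have hfj : ∀ (x : G) (hx : x ∉ Subgroup.center G) (j : Fin n),
      f ⟨x, hx⟩ = j ↔ x ∈ C j := by
    intro x hx j
    constructor
    · rintro rfl
      rw [hf ⟨x, hx⟩]
      exact hself x
    · intro hxC
      obtain ⟨z, hz, hCz⟩ := hCcent j
      have hxz : x * z = z * x := by
        have h1 : x ∈ Subgroup.centralizer ({z} : Set G) := hCz ▸ hxC
        have := Subgroup.mem_centralizer_iff.mp h1 z rfl
        exact this.symm
      apply hCinj
      rw [hf ⟨x, hx⟩, hswap x z hx hz hxz, ← hCz]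
  have hsurj : Function.Surjective f := by
    intro j
    obtain ⟨z, hz, hCz⟩ := hCcent j
    exact ⟨⟨z, hz⟩, (hfj z hz j).mpr (hCz ▸ hself z)⟩
  have hadj : ∀ x y : {g : G // g ∉ Subgroup.center G},
      (commGraph G).Adj x y ↔ x ≠ y ∧ f x = f y := by
    intro x y
    have hcomm : (x : G) * y = (y : G) * x ↔ f x = f y := by
      constructor
      · intro h
        apply hCinj
        rw [hf x, hf y]
        exact hswap _ _ x.2 y.2 h
      · intro h
        have h1 : Subgroup.centralizer ({(x : G)} : Set G)
            = Subgroup.centralizer ({(y : G)} : Set G) := by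
          rw [← hf x, ← hf y, h]
        have h2 : (y : G) ∈ Subgroup.centralizer ({(x : G)} : Set G) :=
          h1 ▸ hself (y : G)
        exact Subgroup.mem_centralizer_iff.mp h2 (x : G) rfl
    show x ≠ y ∧ (x : G) * y = (y : G) * x ↔ _
    exact and_congr Iff.rfl hcomm
  rw [energy_of_blocks (commGraph G) f hsurj hadj]
  -- counting
  have hZle : ∀ j, Subgroup.center G ≤ C j := by
    intro j
    obtain ⟨z, _, hCz⟩ := hCcent j
    rw [hCz]
    exact Subgroup.center_le_centralizer _
  have hCj : ∀ j : Fin n, Nat.card (C j)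
      = (Finset.univ.filter (fun x : {g : G // g ∉ Subgroup.center G} => f x = j)).card
        + Nat.card (Subgroup.center G) := by
    intro j
    rw [Nat.card_eq_fintype_card, Nat.card_eq_fintype_card, Fintype.card_subtype,
      Fintype.card_subtype]
    have hsplitc := Finset.card_filter_add_card_filter_not
      (s := Finset.univ.filter (fun x : G => x ∈ C j)) (p := fun x => x ∈ Subgroup.center G)
    have hZeq : (Finset.univ.filter (fun x : G => x ∈ C j)).filter
        (fun x => x ∈ Subgroup.center G)
        = Finset.univ.filter (fun x : G => x ∈ Subgroup.center G) := by
      ext x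
      simp only [Finset.mem_filter, Finset.mem_univ, true_and]
      exact ⟨fun h => h.2, fun h => ⟨hZle j h, h⟩⟩
    have hbij : ((Finset.univ.filter (fun x : G => x ∈ C j)).filter
        (fun x => ¬ x ∈ Subgroup.center G)).card
        = (Finset.univ.filter
            (fun x : {g : G // g ∉ Subgroup.center G} => f x = j)).card := by
      apply Finset.card_bij
        (fun x hx => (⟨x, by
          have := Finset.mem_filter.mp hx
          exact this.2⟩ : {g : G // g ∉ Subgroup.center G}))
      · intro x hx
        have hx' := Finset.mem_filter.mp hx
        have hx'' := Finset.mem_filter.mp hx'.1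
        simp only [Finset.mem_filter, Finset.mem_univ, true_and]
        exact (hfj x hx'.2 j).mpr hx''.2
      · intro x hx y hy h
        exact congrArg Subtype.val h
      · intro v hv
        have hv' := (Finset.mem_filter.mp hv).2
        refine ⟨v.1, ?_, rfl⟩
        rw [Finset.mem_filter, Finset.mem_filter]
        refine ⟨⟨Finset.mem_univ _, ?_⟩, v.2⟩
        have : f ⟨v.1, v.2⟩ = j := hv'
        exact (hfj v.1 v.2 j).mp this
    rw [hZeq, hbij] at hsplitc
    omega
  have hcardV : Fintype.card {g : G // g ∉ Subgroup.center G}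
      = ∑ j : Fin n,
          (Finset.univ.filter
            (fun x : {g : G // g ∉ Subgroup.center G} => f x = j)).card := by
    rw [← Finset.card_univ]
    exact Finset.card_eq_sum_card_fiberwise (fun x _ => Finset.mem_univ (f x))
  have hsum : ∑ i, (Nat.card (C i) : ℝ)
      = (Fintype.card {g : G // g ∉ Subgroup.center G} : ℝ)
        + n * (Nat.card (Subgroup.center G) : ℝ) := by
    have : ∑ i, (Nat.card (C i) : ℝ)
        = ∑ j : Fin n, (((Finset.univ.filter
            (fun x : {g : G // g ∉ Subgroup.center G} => f x = j)).card : ℝ)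
          + (Nat.card (Subgroup.center G) : ℝ)) := by
      apply Finset.sum_congr rfl
      intro j _
      rw [hCj j]
      push_cast
      ring
    rw [this, Finset.sum_add_distrib, Finset.sum_const, Finset.card_univ, Fintype.card_fin,
      hcardV]
    push_cast
    ring
  rw [hsum]
  push_cast
  ring
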